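/- arXiv:2410.24108 — 4 statements merged into one kernel-verified Lean document; each statement's English description precedes it below -/
import Mathlib

section
/- Let (Ω, P) be a probability space and X : Ω → ℝ a random variable with 0 ≤ X ≤ M almost surely, where M ≥ 0. Let a ∈ [0, M] and ε ∈ [0, 1] be such that P(X ≥ a) ≤ ε. Then for every t ∈ ℝ with t > E[X], the point mass satisfies P(X = t) ≤ ((1 − ε)·a² + ε·M² − (E[X])²)/(t − E[X])². In particular, whenever P(X = t) > 0, its reciprocal 1/P(X = t) is at least (t − E[X])²/((1 − ε)·a² + ε·M² − (E[X])²), i.e., it grows at least quadratically in t. -/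
open MeasureTheory

theorem return_coverage_bound {Ω : Type*} [MeasurableSpace Ω]
    (P : Measure Ω) [IsProbabilityMeasure P]
    (X : Ω → ℝ) (hX : Measurable X) (M : ℝ) (hM : 0 ≤ M)
    (hbound : ∀ᵐ ω ∂P, 0 ≤ X ω ∧ X ω ≤ M)
    (a ε : ℝ) (ha : a ∈ Set.Icc 0 M) (hε : ε ∈ Set.Icc (0 : ℝ) 1)
    (htail : P {ω | a ≤ X ω} ≤ ENNReal.ofReal ε)
    (t : ℝ) (ht : (∫ ω, X ω ∂P) < t) :
    (P {ω | X ω = t}).toReal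
      ≤ ((1 - ε) * a ^ 2 + ε * M ^ 2 - (∫ ω, X ω ∂P) ^ 2) / (t - ∫ ω, X ω ∂P) ^ 2 ∧
    ((P {ω | X ω = t}).toReal > 0 →
      (t - ∫ ω, X ω ∂P) ^ 2 / ((1 - ε) * a ^ 2 + ε * M ^ 2 - (∫ ω, X ω ∂P) ^ 2)
        ≤ 1 / (P {ω | X ω = t}).toReal) := by
  obtain ⟨ha0, haM⟩ := ha
  obtain ⟨hε0, hε1⟩ := hε
  set μ := ∫ ω, X ω ∂P with hμ
  have hXint : Integrable X P := by
    refine Integrable.mono' (integrable_const M) hX.aestronglyMeasurable ?_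
    filter_upwards [hbound] with ω ⟨h0, h1⟩
    rw [Real.norm_eq_abs, abs_le]; exact ⟨by linarith, h1⟩
  have hX2int : Integrable (fun ω => X ω ^ 2) P := by
    refine Integrable.mono' (integrable_const (M ^ 2)) (hX.pow_const 2).aestronglyMeasurable ?_
    filter_upwards [hbound] with ω ⟨h0, h1⟩
    rw [Real.norm_eq_abs, abs_le]
    constructor
    · nlinarith
    · nlinarith
  have hfint : Integrable (fun ω => (X ω - μ) ^ 2) P := by
    have h1 : (fun ω => (X ω - μ) ^ 2) = fun ω => X ω ^ 2 - 2 * μ * X ω + μ ^ 2 := by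
      funext ω; ring
    rw [h1]
    exact (hX2int.sub (hXint.const_mul _)).add (integrable_const _)
  have hc : 0 < (t - μ) ^ 2 := pow_pos (by linarith) 2
  have hsub : {ω | X ω = t} ⊆ {ω | (t - μ) ^ 2 ≤ (X ω - μ) ^ 2} := by
    intro ω hω
    simp only [Set.mem_setOf_eq] at *
    rw [hω]
  have hmono : (P {ω | X ω = t}).toReal
      ≤ (P {ω | (t - μ) ^ 2 ≤ (X ω - μ) ^ 2}).toReal :=
    ENNReal.toReal_mono (measure_ne_top _ _) (measure_mono hsub)
  have hnn : 0 ≤ᵐ[P] fun ω => (X ω - μ) ^ 2 :=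
    Filter.Eventually.of_forall fun ω => sq_nonneg _
  have hcheb := mul_meas_ge_le_integral_of_nonneg hnn hfint ((t - μ) ^ 2)
  have hEX2 : ∫ ω, (X ω - μ) ^ 2 ∂P = (∫ ω, X ω ^ 2 ∂P) - μ ^ 2 := by
    have h1 : (fun ω => (X ω - μ) ^ 2) = fun ω => X ω ^ 2 - 2 * μ * X ω + μ ^ 2 := by
      funext ω; ring
    have hi1 : Integrable (fun ω => X ω ^ 2 - 2 * μ * X ω) P := hX2int.sub (hXint.const_mul _)
    rw [h1, integral_add hi1 (integrable_const _),
        integral_sub hX2int (hXint.const_mul _), integral_const_mul, integral_const]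
    simp only [probReal_univ, Measure.real, measure_univ, ENNReal.toReal_one, smul_eq_mul, one_mul]
    rw [← hμ]; ring
  have hS : MeasurableSet {ω | a ≤ X ω} := measurableSet_le measurable_const hX
  have hptail : (P {ω | a ≤ X ω}).toReal ≤ ε :=
    ENNReal.toReal_le_of_le_ofReal hε0 htail
  have hgint : Integrable
      (fun ω => a ^ 2 + Set.indicator {ω | a ≤ X ω} (fun _ => M ^ 2 - a ^ 2) ω) P :=
    (integrable_const _).add ((integrable_const _).indicator hS)
  have hle : ∀ᵐ ω ∂P, X ω ^ 2
      ≤ a ^ 2 + Set.indicator {ω | a ≤ X ω} (fun _ => M ^ 2 - a ^ 2) ω := by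
    filter_upwards [hbound] with ω ⟨h0, h1⟩
    by_cases h : a ≤ X ω
    · rw [Set.indicator_of_mem (show ω ∈ {ω | a ≤ X ω} from h)]
      nlinarith
    · rw [Set.indicator_of_notMem (show ω ∉ {ω | a ≤ X ω} from h)]
      push_neg at h
      nlinarith
  have hX2 : ∫ ω, X ω ^ 2 ∂P ≤ (1 - ε) * a ^ 2 + ε * M ^ 2 := by
    have h2 : ∫ ω, X ω ^ 2 ∂P
        ≤ ∫ ω, (a ^ 2 + Set.indicator {ω | a ≤ X ω} (fun _ => M ^ 2 - a ^ 2) ω) ∂P :=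
      integral_mono_ae hX2int hgint hle
    have h3 : ∫ ω, (a ^ 2 + Set.indicator {ω | a ≤ X ω} (fun _ => M ^ 2 - a ^ 2) ω) ∂P
        = a ^ 2 + (P {ω | a ≤ X ω}).toReal * (M ^ 2 - a ^ 2) := by
      rw [integral_add (integrable_const _) ((integrable_const _).indicator hS),
          integral_const, integral_indicator_const _ hS]
      simp only [probReal_univ, Measure.real, measure_univ, ENNReal.toReal_one, smul_eq_mul, one_mul]
    have hMa : (0:ℝ) ≤ M ^ 2 - a ^ 2 := by nlinarith
    have h4 : (P {ω | a ≤ X ω}).toReal * (M ^ 2 - a ^ 2) ≤ ε * (M ^ 2 - a ^ 2) :=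
      mul_le_mul_of_nonneg_right hptail hMa
    nlinarith [h2, h3.le, h3.ge]
  have key : (t - μ) ^ 2 * (P {ω | X ω = t}).toReal
      ≤ (1 - ε) * a ^ 2 + ε * M ^ 2 - μ ^ 2 := by
    have h1 : (t - μ) ^ 2 * (P {ω | X ω = t}).toReal
        ≤ (t - μ) ^ 2 * (P {ω | (t - μ) ^ 2 ≤ (X ω - μ) ^ 2}).toReal :=
      mul_le_mul_of_nonneg_left hmono hc.le
    calc (t - μ) ^ 2 * (P {ω | X ω = t}).toReal
        ≤ (t - μ) ^ 2 * (P {ω | (t - μ) ^ 2 ≤ (X ω - μ) ^ 2}).toReal := h1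
      _ ≤ ∫ ω, (X ω - μ) ^ 2 ∂P := hcheb
      _ = (∫ ω, X ω ^ 2 ∂P) - μ ^ 2 := hEX2
      _ ≤ (1 - ε) * a ^ 2 + ε * M ^ 2 - μ ^ 2 := by linarith
  have first : (P {ω | X ω = t}).toReal
      ≤ ((1 - ε) * a ^ 2 + ε * M ^ 2 - μ ^ 2) / (t - μ) ^ 2 := by
    rw [le_div_iff₀ hc]
    linarith [key]
  refine ⟨first, fun hp => ?_⟩
  have hB : 0 < (1 - ε) * a ^ 2 + ε * M ^ 2 - μ ^ 2 := by
    nlinarith [lt_of_lt_of_le hp first, hc]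
  rw [div_le_div_iff₀ hB hp]
  linarith [key]
end

section
/- Let K > 0, t₀ ∈ ℝ, and let f : ℝ → ℝ be a measurable function that is nonnegative on [t₀, ∞), K-Lipschitz on [t₀, ∞), and integrable on [t₀, ∞). Then for every t ≥ t₀, f(t) ≤ sqrt(2K · ∫_{t₀}^{∞} f(x) dx). -/
open MeasureTheory

theorem lipschitz_density_pointwise_bound (K t₀ : ℝ) (hK : 0 < K) (f : ℝ → ℝ)
    (hmeas : Measurable f)
    (hnonneg : ∀ x, t₀ ≤ x → 0 ≤ f x)
    (hlip : ∀ x y, t₀ ≤ x → t₀ ≤ y → |f x - f y| ≤ K * |x - y|)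
    (hint : IntegrableOn f (Set.Ici t₀)) :
    ∀ t, t₀ ≤ t → f t ≤ Real.sqrt (2 * K * ∫ x in Set.Ici t₀, f x) := by
  intro t ht
  set I := ∫ x in Set.Ici t₀, f x with hI
  have hI0 : 0 ≤ I := setIntegral_nonneg measurableSet_Ici hnonneg
  by_cases ha : f t ≤ 0
  · exact ha.trans (Real.sqrt_nonneg _)
  push_neg at ha
  set a := f t with haa
  set c := a / K with hc
  have hc0 : 0 < c := div_pos ha hK
  -- lower bound f on [t, t+c]
  have hptw : ∀ x ∈ Set.Icc t (t + c), a - K * (x - t) ≤ f x := by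
    intro x hx
    have hx1 : t ≤ x := hx.1
    have htx : t₀ ≤ x := ht.trans hx1
    have := hlip t x ht htx
    have habs : f t - f x ≤ K * |t - x| := (abs_le.mp this).2
    have : |t - x| = x - t := by rw [abs_sub_comm]; exact abs_of_nonneg (by linarith)
    rw [this] at habs
    linarith
  have hIcc : Set.Icc t (t + c) ⊆ Set.Ici t₀ := fun x hx => ht.trans hx.1
  have hintIcc : IntegrableOn f (Set.Icc t (t + c)) := hint.mono_set hIcc
  have hintg : IntegrableOn (fun x => a - K * (x - t)) (Set.Icc t (t + c)) :=
    (Continuous.integrableOn_Icc (by continuity))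
  have h1 : ∫ x in Set.Icc t (t + c), (a - K * (x - t)) ≤ ∫ x in Set.Icc t (t + c), f x := by
    apply setIntegral_mono_on hintg hintIcc measurableSet_Icc hptw
  have h2 : ∫ x in Set.Icc t (t + c), f x ≤ I := by
    apply setIntegral_mono_set hint
    · exact Filter.eventually_of_mem (self_mem_ae_restrict measurableSet_Ici) hnonneg
    · exact Filter.Eventually.of_forall hIcc
  have hcomp : ∫ x in Set.Icc t (t + c), (a - K * (x - t)) = a ^ 2 / (2 * K) := by
    rw [integral_Icc_eq_integral_Ioc, ← intervalIntegral.integral_of_le (by linarith : t ≤ t + c)]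
    have : ∫ x in t..(t + c), (a - K * (x - t)) =
        ∫ x in t..(t + c), (a + K * t - K * x) := by
      apply intervalIntegral.integral_congr; intro x _; ring
    rw [this]
    rw [intervalIntegral.integral_sub (by apply Continuous.intervalIntegrable; continuity) (by apply Continuous.intervalIntegrable; continuity)]
    rw [intervalIntegral.integral_const, intervalIntegral.integral_const_mul,
      integral_id]
    have hK' : K ≠ 0 := ne_of_gt hK
    field_simp [hc]
    have e : K * c = a := by rw [hc]; field_simp
    linear_combination (a - K * c) * e
  have key : a ^ 2 / (2 * K) ≤ I := by rw [← hcomp]; linarith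
  have h2K : (0 : ℝ) < 2 * K := by linarith
  have : a ^ 2 ≤ 2 * K * I := by
    rw [div_le_iff₀ h2K] at key; linarith [key]
  calc a ≤ Real.sqrt (a ^ 2) := by rw [Real.sqrt_sq ha.le]
    _ ≤ Real.sqrt (2 * K * I) := Real.sqrt_le_sqrt this
end

section
/- Let K > 0, t₀ ∈ ℝ, p₀ ≥ 0, and let f : ℝ → ℝ be a measurable function that is nonnegative on [t₀, ∞), K-Lipschitz on [t₀, ∞), and integrable on [t₀, ∞). If ∫_{t₀}^{∞} f(x) dx ≤ p₀²/(2K), then f(t) ≤ p₀ for every t ≥ t₀. -/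
open MeasureTheory

theorem lipschitz_density_contrapositive (K t₀ p₀ : ℝ) (hK : 0 < K) (hp₀ : 0 ≤ p₀)
    (f : ℝ → ℝ) (hmeas : Measurable f)
    (hnonneg : ∀ x, t₀ ≤ x → 0 ≤ f x)
    (hlip : ∀ x y, t₀ ≤ x → t₀ ≤ y → |f x - f y| ≤ K * |x - y|)
    (hint : IntegrableOn f (Set.Ici t₀))
    (htail : (∫ x in Set.Ici t₀, f x) ≤ p₀ ^ 2 / (2 * K)) :
    ∀ t, t₀ ≤ t → f t ≤ p₀ := by
  intro t ht
  by_contra h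
  push_neg at h
  set c := f t with hc
  have hcpos : 0 < c := lt_of_le_of_lt hp₀ h
  set b := t + c / K with hb
  have htb : t ≤ b := by
    have h0 : 0 ≤ c / K := le_of_lt (div_pos hcpos hK)
    rw [hb]; linarith
  -- lower bound pointwise on Icc t b
  have hptw : ∀ x ∈ Set.Icc t b, c - K * (x - t) ≤ f x := by
    intro x hx
    have hx1 : t ≤ x := hx.1
    have ht0x : t₀ ≤ x := le_trans ht hx1
    have hl := hlip x t ht0x ht
    have habs : |x - t| = x - t := abs_of_nonneg (by linarith)
    rw [habs] at hl
    have h2 := neg_le_of_abs_le hl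
    linarith
  -- integrability
  have hsub : Set.Icc t b ⊆ Set.Ici t₀ := fun x hx => le_trans ht hx.1
  have hintIcc : IntegrableOn f (Set.Icc t b) := hint.mono_set hsub
  have hg : IntegrableOn (fun x => c - K * (x - t)) (Set.Icc t b) :=
    (Continuous.integrableOn_Icc (by continuity))
  -- integral of g
  have hIg : (∫ x in Set.Icc t b, (c - K * (x - t))) = c ^ 2 / (2 * K) := by
    rw [MeasureTheory.integral_Icc_eq_integral_Ioc,
      ← intervalIntegral.integral_of_le htb]
    have : (∫ x in t..b, (c - K * (x - t)))
        = (∫ x in t..b, c) - K * (∫ x in t..b, (x - t)) := by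
      rw [← intervalIntegral.integral_const_mul, ← intervalIntegral.integral_sub]
      · exact intervalIntegrable_const
      · exact (IntervalIntegrable.sub intervalIntegral.intervalIntegrable_id
          intervalIntegrable_const).const_mul K
    rw [this]
    have h1 : (∫ x in t..b, c) = c / K * c := by
      rw [intervalIntegral.integral_const]
      simp [hb]
      try ring
    have h2 : (∫ x in t..b, (x - t)) = (c / K) ^ 2 / 2 := by
      have := intervalIntegral.integral_comp_sub_right (a := t) (b := b)
        (fun x => x) t
      rw [this]
      simp [hb, integral_id]
      try ring
    rw [h1, h2]
    field_simp
    ring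
  -- chain of inequalities
  have hmono : (∫ x in Set.Icc t b, (c - K * (x - t))) ≤ ∫ x in Set.Icc t b, f x := by
    apply MeasureTheory.setIntegral_mono_on hg hintIcc measurableSet_Icc hptw
  have hsubint : (∫ x in Set.Icc t b, f x) ≤ ∫ x in Set.Ici t₀, f x := by
    apply MeasureTheory.setIntegral_mono_set hint
    · filter_upwards [ae_restrict_mem measurableSet_Ici] with x hx using hnonneg x hx
    · exact HasSubset.Subset.eventuallyLE hsub
  have hfinal : c ^ 2 / (2 * K) ≤ p₀ ^ 2 / (2 * K) := by
    rw [← hIg]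
    linarith
  have h2K : 0 < 2 * K := by linarith
  have : c ^ 2 ≤ p₀ ^ 2 := by
    exact (div_le_div_iff_of_pos_right h2K).mp hfinal
  have : c ≤ p₀ := by nlinarith
  linarith
end

section
/- Let (Ω, P) be a probability space and X : Ω → ℝ a random variable with 0 ≤ X ≤ M almost surely (M ≥ 0), whose law has a Lebesgue density f : ℝ → ℝ. Let a ∈ [0, M] and ε ∈ [0, 1] satisfy P(X ≥ a) ≤ ε, let K > 0, and suppose f is nonnegative and K-Lipschitz on [a, ∞). Set μ = E[X]. Then for every t ≥ a with t > μ, f(t) ≤ sqrt(2K · ((1 − ε)·a³ + ε·M³)) / (t − μ)^{3/2}. -/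
open MeasureTheory

theorem continuous_return_coverage_bound {Ω : Type*} [MeasurableSpace Ω]
    (P : Measure Ω) [IsProbabilityMeasure P]
    (X : Ω → ℝ) (hX : Measurable X) (M : ℝ) (hM : 0 ≤ M)
    (hbound : ∀ᵐ ω ∂P, 0 ≤ X ω ∧ X ω ≤ M)
    (f : ℝ → ℝ) (hfmeas : Measurable f)
    (hdens : ∀ B : Set ℝ, MeasurableSet B → (P (X ⁻¹' B)).toReal = ∫ x in B, f x)
    (a ε : ℝ) (ha : a ∈ Set.Icc 0 M) (hε : ε ∈ Set.Icc (0 : ℝ) 1)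
    (htail : P {ω | a ≤ X ω} ≤ ENNReal.ofReal ε)
    (K : ℝ) (hK : 0 < K)
    (hnonneg : ∀ x, a ≤ x → 0 ≤ f x)
    (hlip : ∀ x y, a ≤ x → a ≤ y → |f x - f y| ≤ K * |x - y|) :
    ∀ t, a ≤ t → (∫ ω, X ω ∂P) < t →
      f t ≤ Real.sqrt (2 * K * ((1 - ε) * a ^ 3 + ε * M ^ 3))
              / (t - ∫ ω, X ω ∂P) ^ ((3 : ℝ) / 2) := by
  intro t hat hμt
  set μ := ∫ ω, X ω ∂P with hμdef
  have hμ0 : 0 ≤ μ := integral_nonneg_of_ae (hbound.mono fun ω h => h.1)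
  have ht0 : 0 < t := lt_of_le_of_lt hμ0 hμt
  have hft : 0 ≤ f t := hnonneg t hat
  set δ := f t / K with hδdef
  have hδ0 : 0 ≤ δ := div_nonneg hft hK.le
  set C := (1 - ε) * a ^ 3 + ε * M ^ 3 with hCdef
  have haM : a ^ 3 ≤ M ^ 3 := pow_le_pow_left₀ ha.1 ha.2 3
  have hC0 : 0 ≤ C := by nlinarith [pow_nonneg ha.1 3, hε.1, hε.2]
  -- Step A : triangle bound
  have hIcc : MeasurableSet (Set.Icc t (t + δ)) := measurableSet_Icc
  have hgcont : Continuous (fun x : ℝ => f t - K * (x - t)) := by continuity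
  have hgint : IntegrableOn (fun x : ℝ => f t - K * (x - t)) (Set.Icc t (t + δ)) :=
    hgcont.integrableOn_Icc
  have hfb : ∀ x ∈ Set.Icc t (t + δ), ‖f x‖ ≤ f t + K * δ := by
    intro x hx
    have hax : a ≤ x := le_trans hat hx.1
    have h1 := hlip x t hax hat
    have h2 : |x - t| ≤ δ := by
      rw [abs_of_nonneg (by linarith [hx.1])]; linarith [hx.2]
    rw [Real.norm_eq_abs, abs_of_nonneg (hnonneg x hax)]
    have h3 := (abs_le.mp h1).2
    nlinarith [hK.le]
  have hfint : IntegrableOn f (Set.Icc t (t + δ)) := by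
    refine Integrable.mono' (g := fun _ => f t + K * δ)
      (integrableOn_const measure_Icc_lt_top.ne)
      (hfmeas.aestronglyMeasurable.restrict) ?_
    filter_upwards [ae_restrict_mem hIcc] with x hx using hfb x hx
  have hlow : ∀ x ∈ Set.Icc t (t + δ), f t - K * (x - t) ≤ f x := by
    intro x hx
    have hax : a ≤ x := le_trans hat hx.1
    have h1 := (abs_le.mp (hlip t x hat hax)).2
    have h2 : |t - x| = x - t := by
      rw [abs_sub_comm]; exact abs_of_nonneg (by linarith [hx.1])
    rw [h2] at h1
    linarith
  have hmono : ∫ x in Set.Icc t (t + δ), (f t - K * (x - t)) ≤ ∫ x in Set.Icc t (t + δ), f x :=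
    setIntegral_mono_on hgint hfint hIcc hlow
  have hcalc : ∫ x in Set.Icc t (t + δ), (f t - K * (x - t)) = f t ^ 2 / (2 * K) := by
    rw [MeasureTheory.integral_Icc_eq_integral_Ioc,
      ← intervalIntegral.integral_of_le (by linarith : t ≤ t + δ)]
    have hii : IntervalIntegrable (fun x : ℝ => K * (x - t)) volume t (t + δ) :=
      (continuous_const.mul (continuous_id.sub continuous_const)).intervalIntegrable _ _
    have h2 : (∫ x in t..(t + δ), (x - t)) = δ ^ 2 / 2 := by
      have h3 := intervalIntegral.integral_comp_sub_right (a := t) (b := t + δ)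
        (fun x => x) t
      simp only [sub_self, add_sub_cancel_left] at h3
      rw [h3, integral_id]
      ring
    rw [intervalIntegral.integral_sub (intervalIntegrable_const) hii,
      intervalIntegral.integral_const, intervalIntegral.integral_const_mul, h2]
    have hfK : f t = K * δ := by rw [hδdef]; field_simp [hK.ne']
    rw [hfK]
    simp only [smul_eq_mul, add_sub_cancel_left]
    field_simp
    ring
  have hA : f t ^ 2 / (2 * K) ≤ (P (X ⁻¹' Set.Icc t (t + δ))).toReal := by
    rw [hdens _ hIcc]; linarith [hmono, hcalc]
  -- Step B/C : Markov on X^3 and moment bound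
  set S : Set Ω := {ω | t ≤ X ω} with hSdef
  have hSmeas : MeasurableSet S := measurableSet_le measurable_const hX
  have hsub : X ⁻¹' Set.Icc t (t + δ) ⊆ S := fun ω hω => hω.1
  have hPS : f t ^ 2 / (2 * K) ≤ (P S).toReal := by
    refine le_trans hA (ENNReal.toReal_mono (measure_ne_top _ _) (measure_mono hsub))
  have hX3int : Integrable (fun ω => X ω ^ 3) P := by
    refine Integrable.mono' (integrable_const (M ^ 3))
      ((hX.pow_const 3).aestronglyMeasurable) ?_
    filter_upwards [hbound] with ω hω
    rw [Real.norm_eq_abs, abs_of_nonneg (pow_nonneg hω.1 3)]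
    exact pow_le_pow_left₀ hω.1 hω.2 3
  have hMarkov : t ^ 3 * (P S).toReal ≤ ∫ ω, X ω ^ 3 ∂P := by
    have hind : Integrable (S.indicator fun _ => t ^ 3) P :=
      (integrable_const (t ^ 3)).indicator hSmeas
    have h1 : ∫ ω, S.indicator (fun _ => t ^ 3) ω ∂P ≤ ∫ ω, X ω ^ 3 ∂P := by
      refine integral_mono_ae hind hX3int ?_
      filter_upwards [hbound] with ω hω
      by_cases hωS : ω ∈ S
      · rw [Set.indicator_of_mem hωS]
        exact pow_le_pow_left₀ ht0.le hωS 3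
      · rw [Set.indicator_of_notMem hωS]
        exact pow_nonneg hω.1 3
    rwa [integral_indicator_const _ hSmeas, smul_eq_mul, mul_comm] at h1
  set p := (P {ω | a ≤ X ω}).toReal with hpdef
  have hp0 : 0 ≤ p := ENNReal.toReal_nonneg
  have hpε : p ≤ ε := by
    have := ENNReal.toReal_mono ENNReal.ofReal_ne_top htail
    rwa [ENNReal.toReal_ofReal hε.1] at this
  have hEX3 : ∫ ω, X ω ^ 3 ∂P ≤ a ^ 3 + (M ^ 3 - a ^ 3) * p := by
    have hAmeas : MeasurableSet {ω | a ≤ X ω} := measurableSet_le measurable_const hX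
    have hind : Integrable (fun ω => a ^ 3 + ({ω | a ≤ X ω}).indicator
        (fun _ => M ^ 3 - a ^ 3) ω) P :=
      (integrable_const _).add (((integrable_const _)).indicator hAmeas)
    have h1 : ∫ ω, X ω ^ 3 ∂P ≤ ∫ ω, (a ^ 3 + ({ω | a ≤ X ω}).indicator
        (fun _ => M ^ 3 - a ^ 3) ω) ∂P := by
      refine integral_mono_ae hX3int hind ?_
      filter_upwards [hbound] with ω hω
      by_cases hωA : ω ∈ {ω | a ≤ X ω}
      · rw [Set.indicator_of_mem hωA]
        have : X ω ^ 3 ≤ M ^ 3 := pow_le_pow_left₀ hω.1 hω.2 3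
        linarith
      · rw [Set.indicator_of_notMem hωA]
        have hXa : X ω ≤ a := le_of_not_ge hωA
        have : X ω ^ 3 ≤ a ^ 3 := pow_le_pow_left₀ hω.1 hXa 3
        linarith
    rw [integral_add (integrable_const _) ((integrable_const _).indicator hAmeas),
      integral_const, integral_indicator_const _ hAmeas] at h1
    simpa [smul_eq_mul, mul_comm, hpdef, Measure.real] using h1
  have hEX3C : ∫ ω, X ω ^ 3 ∂P ≤ C := by
    have : a ^ 3 + (M ^ 3 - a ^ 3) * p ≤ C := by nlinarith
    linarith
  -- Combine
  have hkey : f t ^ 2 * (t - μ) ^ 3 ≤ 2 * K * C := by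
    have h1 : t ^ 3 * (f t ^ 2 / (2 * K)) ≤ C := by
      calc t ^ 3 * (f t ^ 2 / (2 * K)) ≤ t ^ 3 * (P S).toReal := by
            exact mul_le_mul_of_nonneg_left hPS (by positivity)
        _ ≤ ∫ ω, X ω ^ 3 ∂P := hMarkov
        _ ≤ C := hEX3C
    have htμ : (t - μ) ^ 3 ≤ t ^ 3 := pow_le_pow_left₀ (by linarith) (by linarith) 3
    have h2 : f t ^ 2 * (t - μ) ^ 3 ≤ f t ^ 2 * t ^ 3 :=
      mul_le_mul_of_nonneg_left htμ (sq_nonneg _)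
    have h3 : f t ^ 2 * t ^ 3 ≤ 2 * K * C := by
      have := mul_le_mul_of_nonneg_left h1 (le_of_lt (by positivity : (0:ℝ) < 2 * K))
      calc f t ^ 2 * t ^ 3 = 2 * K * (t ^ 3 * (f t ^ 2 / (2 * K))) := by
            field_simp
        _ ≤ 2 * K * C := this
    linarith
  set d := t - μ with hddef
  have hd0 : 0 < d := by simp [hddef]; linarith
  have hd32 : d ^ ((3:ℝ)/2) = Real.sqrt (d ^ 3) := by
    rw [Real.sqrt_eq_rpow, ← Real.rpow_natCast d 3, ← Real.rpow_mul hd0.le]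
    norm_num
  have h4 : f t * d ^ ((3:ℝ)/2) ≤ Real.sqrt (2 * K * C) := by
    have := Real.sqrt_le_sqrt hkey
    rwa [Real.sqrt_mul (sq_nonneg _), Real.sqrt_sq hft, ← hd32] at this
  have hdpos : 0 < d ^ ((3:ℝ)/2) := Real.rpow_pos_of_pos hd0 _
  rw [le_div_iff₀ hdpos]
  exact h4
end
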